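/- Let (f,g) be an admissible breadth-first pair and suppose that any two solutions c, c̃ to the initial value problem c(t) = ∫₀ᵗ (f(c(s)) + g(s)) ds, c(0) = 0, are strictly increasing. Then c = c̃; i.e., strict monotonicity of all solutions forces uniqueness. -/

import Mathlib

open Set MeasureTheory Filter

/-- Right-continuity at every point of `[0,∞)`. -/
def RightCont (f : ℝ → ℝ) : Prop := ∀ t ≥ (0:ℝ), ContinuousWithinAt f (Ici t) t

/-- `fm` is the left-limit function of `f` on `(0,∞)`. -/
def LeftLimAt (f fm : ℝ → ℝ) : Prop :=
  ∀ t > (0:ℝ), Tendsto f (nhdsWithin t (Iio t)) (nhds (fm t))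

/-- An admissible breadth-first pair `(f,g)` (with left-limit functions `fm`, `gm`):
`f`, `g` are càdlàg on `[0,∞)`, `f` has no negative jumps, `g` is non-decreasing,
and `f(0) + g(0) ≥ 0`. -/
def AdmissiblePair (f fm g gm : ℝ → ℝ) : Prop :=
  RightCont f ∧ LeftLimAt f fm ∧ (∀ t > (0:ℝ), fm t ≤ f t) ∧
  RightCont g ∧ LeftLimAt g gm ∧ (∀ s t, (0:ℝ) ≤ s → s ≤ t → g s ≤ g t) ∧
  0 ≤ f 0 + g 0

noncomputable def tinv (d : ℝ → ℝ) (T : ℝ) (x : ℝ) : ℝ :=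
  sInf (insert (T + 1) {t | 0 ≤ t ∧ x ≤ d t})

section tinv
variable {d : ℝ → ℝ} {T : ℝ}

lemma tinv_bdd (hT : 0 ≤ T) : ∀ x, BddBelow (insert (T + 1) {t | 0 ≤ t ∧ x ≤ d t}) := by
  intro x
  refine ⟨0, ?_⟩
  rintro t (rfl | ⟨ht, -⟩)
  · linarith
  · exact ht

lemma tinv_nonneg (hT : 0 ≤ T) (x : ℝ) : 0 ≤ tinv d T x :=
  le_csInf (insert_nonempty _ _) (by rintro t (rfl | ⟨ht, -⟩) <;> linarith)

lemma tinv_mono (hT : 0 ≤ T) : Monotone (tinv d T) := by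
  intro x y hxy
  refine csInf_le_csInf (tinv_bdd hT x) (insert_nonempty _ _) ?_
  rintro t (rfl | ⟨ht, hyt⟩)
  · exact mem_insert _ _
  · exact mem_insert_of_mem _ ⟨ht, hxy.trans hyt⟩

lemma tinv_le (hT : 0 ≤ T) {x : ℝ} (hx : x ≤ d T) : tinv d T x ≤ T :=
  csInf_le (tinv_bdd hT x) (mem_insert_of_mem _ ⟨hT, hx⟩)

lemma tinv_spec (hcont : Continuous d) (hT : 0 ≤ T) {x : ℝ}
    (h0 : d 0 ≤ x) (hx : x ≤ d T) : d (tinv d T x) = x := by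
  have hcl : IsClosed (insert (T + 1) {t | 0 ≤ t ∧ x ≤ d t}) := by
    rw [insert_eq, setOf_and]
    exact isClosed_singleton.union
      ((isClosed_le continuous_const continuous_id).inter
        (isClosed_le continuous_const hcont))
  have hmem : tinv d T x ∈ insert (T + 1) {t | 0 ≤ t ∧ x ≤ d t} :=
    hcl.csInf_mem (insert_nonempty _ _) (tinv_bdd hT x)
  have hle : tinv d T x ≤ T := tinv_le hT hx
  rcases hmem with h | ⟨hτ0, hxd⟩
  · exfalso; rw [h] at hle; linarith
  · obtain ⟨t, ht, hdt⟩ := intermediate_value_Icc hτ0 hcont.continuousOn ⟨h0, hxd⟩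
    have h1 : tinv d T x ≤ t := csInf_le (tinv_bdd hT x) (mem_insert_of_mem _ ⟨ht.1, hdt.ge⟩)
    have : t = tinv d T x := le_antisymm ht.2 h1
    rw [← this, hdt]

lemma tinv_eval (hmono : StrictMonoOn d (Ici 0)) (hT : 0 ≤ T) {s : ℝ} (hs : s ∈ Icc 0 T) :
    tinv d T (d s) = s := by
  refine le_antisymm (csInf_le (tinv_bdd hT _) (mem_insert_of_mem _ ⟨hs.1, le_rfl⟩)) ?_
  refine le_csInf (insert_nonempty _ _) ?_
  rintro t (rfl | ⟨ht, hst⟩)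
  · linarith [hs.2]
  · by_contra hts
    push_neg at hts
    exact absurd hst (not_le.mpr (hmono (mem_Ici.mpr ht) (mem_Ici.mpr hs.1) hts))

end tinv

lemma measurable_of_rightCont {f : ℝ → ℝ} (hf : RightCont f) :
    Measurable (fun x => f (max 0 x)) := by
  have key : ∀ x : ℝ, Tendsto (fun n : ℕ => f (max 0 ((⌊x * 2 ^ n⌋ + 1 : ℤ) / 2 ^ n)))
      atTop (nhds (f (max 0 x))) := by
    intro x
    have h2 : ∀ n : ℕ, (0:ℝ) < 2 ^ n := fun n => by positivity
    have hgt : ∀ n : ℕ, x < ((⌊x * 2 ^ n⌋ + 1 : ℤ) / 2 ^ n : ℝ) := by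
      intro n
      rw [lt_div_iff₀ (h2 n)]
      push_cast
      exact Int.lt_floor_add_one _
    have hle : ∀ n : ℕ, ((⌊x * 2 ^ n⌋ + 1 : ℤ) / 2 ^ n : ℝ) ≤ x + (1 / 2 : ℝ) ^ n := by
      intro n
      rw [div_le_iff₀ (h2 n)]
      push_cast
      have h3 := Int.floor_le (x * 2 ^ n)
      have h4 : ((1:ℝ) / 2) ^ n * 2 ^ n = 1 := by
        rw [div_pow, one_pow, div_mul_cancel₀]
        exact (h2 n).ne'
      nlinarith
    have hyx : Tendsto (fun n : ℕ => ((⌊x * 2 ^ n⌋ + 1 : ℤ) / 2 ^ n : ℝ)) atTop (nhds x) := by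
      have h1 : Tendsto (fun n : ℕ => x + (1 / 2 : ℝ) ^ n) atTop (nhds (x + 0)) :=
        tendsto_const_nhds.add
          (tendsto_pow_atTop_nhds_zero_of_lt_one (by norm_num) (by norm_num))
      rw [add_zero] at h1
      exact tendsto_of_tendsto_of_tendsto_of_le_of_le tendsto_const_nhds h1
        (fun n => (hgt n).le) hle
    rcases lt_or_ge x 0 with hx | hx
    · have hev : ∀ᶠ n : ℕ in atTop, ((⌊x * 2 ^ n⌋ + 1 : ℤ) / 2 ^ n : ℝ) < 0 := by
        have := hyx (Iio_mem_nhds hx)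
        simpa using this
      refine Tendsto.congr' ?_ (tendsto_const_nhds (x := f (max 0 x)))
      filter_upwards [hev] with n hn
      rw [max_eq_left hn.le, max_eq_left hx.le]
    · have hxx : max 0 x = x := max_eq_right hx
      have hcw : ContinuousWithinAt f (Ici x) x := hf x hx
      have htend : Tendsto (fun n : ℕ => ((⌊x * 2 ^ n⌋ + 1 : ℤ) / 2 ^ n : ℝ)) atTop
          (nhdsWithin x (Ici x)) := by
        rw [tendsto_nhdsWithin_iff]
        exact ⟨hyx, Eventually.of_forall fun n => (hgt n).le⟩
      have h5 : Tendsto (fun n : ℕ => f (((⌊x * 2 ^ n⌋ + 1 : ℤ) / 2 ^ n : ℝ))) atTop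
          (nhds (f x)) := hcw.tendsto.comp htend
      rw [hxx]
      refine Tendsto.congr (fun n => ?_) h5
      rw [max_eq_right (hx.trans (hgt n).le)]
  refine measurable_of_tendsto_metrizable (fun n => ?_) (tendsto_pi_nhds.mpr key)
  have : (fun x : ℝ => f (max 0 ((⌊x * 2 ^ n⌋ + 1 : ℤ) / 2 ^ n))) =
      (fun k : ℤ => f (max 0 ((k + 1 : ℤ) / 2 ^ n))) ∘ (fun x : ℝ => ⌊x * 2 ^ n⌋) := rfl
  rw [this]
  exact measurable_from_top.comp ((measurable_id.mul_const _).floor)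

lemma sol_diff {F d : ℝ → ℝ}
    (hint : ∀ t ≥ (0:ℝ), IntervalIntegrable F volume 0 t)
    (hftc : ∀ t ≥ (0:ℝ), d t = ∫ s in (0:ℝ)..t, F s)
    {p q : ℝ} (hp : 0 ≤ p) (hpq : p ≤ q) :
    ∫ s in p..q, F s = d q - d p := by
  have hq : (0:ℝ) ≤ q := hp.trans hpq
  rw [hftc q hq, hftc p hp]
  rw [← intervalIntegral.integral_interval_sub_left (hint q hq)
    ((hint q hq).mono_set ?_)]
  rw [uIcc_of_le hp, uIcc_of_le hq]
  exact Icc_subset_Icc le_rfl hpq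

lemma F_nonneg {F d : ℝ → ℝ}
    (hF : ∀ t ≥ (0:ℝ), ContinuousWithinAt F (Ici t) t)
    (hint : ∀ t ≥ (0:ℝ), IntervalIntegrable F volume 0 t)
    (hftc : ∀ t ≥ (0:ℝ), d t = ∫ s in (0:ℝ)..t, F s)
    (hmono : StrictMonoOn d (Ici 0)) :
    ∀ t ≥ (0:ℝ), 0 ≤ F t := by
  intro t ht
  by_contra hneg
  push_neg at hneg
  have h2 : F t < F t / 2 := by linarith
  have hev : ∀ᶠ s in nhdsWithin t (Ici t), F s < F t / 2 :=
    (hF t ht).eventually (eventually_lt_nhds h2)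
  obtain ⟨δ, hδ, hball⟩ := Metric.mem_nhdsWithin_iff.mp hev
  replace hball : ∀ s, dist s t < δ → s ∈ Ici t → F s < F t / 2 :=
    fun s h1 h2 => hball ⟨h1, h2⟩
  set t' := t + δ / 2 with ht'
  have htt' : t < t' := by rw [ht']; linarith
  have hsub : ∀ s ∈ Icc t t', F s ≤ F t / 2 := by
    intro s hs
    refine (hball s ?_ hs.1).le
    rw [Real.dist_eq, abs_sub_lt_iff]
    have h1 := hs.1; have h2 := hs.2
    rw [ht'] at h2
    constructor <;> linarith
  have hii : IntervalIntegrable F volume t t' := by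
    refine (hint t' (by linarith)).mono_set ?_
    rw [uIcc_of_le htt'.le, uIcc_of_le (by linarith : (0:ℝ) ≤ t')]
    exact Icc_subset_Icc ht le_rfl
  have hBound : ∫ s in t..t', F s ≤ ∫ s in t..t', F t / 2 :=
    intervalIntegral.integral_mono_on htt'.le hii intervalIntegrable_const hsub
  rw [intervalIntegral.integral_const, smul_eq_mul] at hBound
  have hdiff : ∫ s in t..t', F s = d t' - d t := sol_diff hint hftc ht htt'.le
  have hlt : d t < d t' := hmono (mem_Ici.mpr ht) (mem_Ici.mpr (by linarith)) htt'
  have : (t' - t) * (F t / 2) < 0 := by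
    apply mul_neg_of_pos_of_neg <;> [linarith; linarith]
  linarith [hBound, hdiff, hlt]

lemma lint_Ioc {F d : ℝ → ℝ}
    (hFnn : ∀ t ≥ (0:ℝ), 0 ≤ F t)
    (hint : ∀ t ≥ (0:ℝ), IntervalIntegrable F volume 0 t)
    (hftc : ∀ t ≥ (0:ℝ), d t = ∫ s in (0:ℝ)..t, F s)
    {p q : ℝ} (hp : 0 ≤ p) (hpq : p ≤ q) :
    ∫⁻ s in Ioc p q, ENNReal.ofReal (F s) = ENNReal.ofReal (d q - d p) := by
  have hq : (0:ℝ) ≤ q := hp.trans hpq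
  have hInt : IntegrableOn F (Ioc p q) volume :=
    (hint q hq).1.mono_set (Ioc_subset_Ioc hp le_rfl)
  have hnn : 0 ≤ᵐ[volume.restrict (Ioc p q)] F := by
    rw [EventuallyLE, ae_restrict_iff' measurableSet_Ioc]
    exact ae_of_all _ fun s hs => hFnn s (hp.trans hs.1.le)
  rw [← ofReal_integral_eq_lintegral_ofReal hInt hnn,
    ← intervalIntegral.integral_of_le hpq, sol_diff hint hftc hp hpq]

lemma map_withDensity_eq {F d : ℝ → ℝ}
    (hcont : Continuous d)
    (hmono : StrictMonoOn d (Ici 0))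
    (hFnn : ∀ t ≥ (0:ℝ), 0 ≤ F t)
    (hint : ∀ t ≥ (0:ℝ), IntervalIntegrable F volume 0 t)
    (hftc : ∀ t ≥ (0:ℝ), d t = ∫ s in (0:ℝ)..t, F s)
    {a b : ℝ} (ha : 0 ≤ a) (hab : a ≤ b) :
    Measure.map d ((volume.restrict (Ioc a b)).withDensity
        (fun s => ENNReal.ofReal (F s)))
      = volume.restrict (Ioc (d a) (d b)) := by
  have hb : 0 ≤ b := ha.trans hab
  have hd0 : d 0 = 0 := by rw [hftc 0 le_rfl, intervalIntegral.integral_same]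
  have hmonoD : MonotoneOn d (Ici 0) := hmono.monotoneOn
  have hdab : d a ≤ d b := hmonoD (mem_Ici.mpr ha) (mem_Ici.mpr hb) hab
  set ρ := (volume.restrict (Ioc a b)).withDensity (fun s => ENNReal.ofReal (F s)) with hρ
  have hρ_apply : ∀ E : Set ℝ, MeasurableSet E →
      ρ E = ∫⁻ s in E ∩ Ioc a b, ENNReal.ofReal (F s) := by
    intro E hE
    rw [hρ, withDensity_apply _ hE, Measure.restrict_restrict hE]
  have hfin : IsFiniteMeasure (Measure.map d ρ) := by
    constructor
    rw [Measure.map_apply hcont.measurable MeasurableSet.univ, preimage_univ,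
      hρ_apply univ MeasurableSet.univ, univ_inter, lint_Ioc hFnn hint hftc ha hab]
    exact ENNReal.ofReal_lt_top
  refine @Measure.ext_of_Iic ℝ _ _ _ _ _ _ (Measure.map d ρ)
    (volume.restrict (Ioc (d a) (d b))) hfin fun x => ?_
  have hpre : MeasurableSet (d ⁻¹' Iic x) := hcont.measurable measurableSet_Iic
  rw [Measure.map_apply hcont.measurable measurableSet_Iic, hρ_apply _ hpre,
    Measure.restrict_apply measurableSet_Iic]
  rcases lt_or_ge x (d a) with hxa | hxa
  · have h1 : d ⁻¹' Iic x ∩ Ioc a b = ∅ := by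
      ext s
      simp only [mem_inter_iff, mem_preimage, mem_Iic, mem_Ioc, mem_empty_iff_false, iff_false,
        not_and, and_imp]
      intro hdx hsa hsb
      have : d a < d s := hmono (mem_Ici.mpr ha) (mem_Ici.mpr (ha.trans hsa.le)) hsa
      linarith
    have h2 : Iic x ∩ Ioc (d a) (d b) = ∅ := by
      ext z
      simp only [mem_inter_iff, mem_Iic, mem_Ioc, mem_empty_iff_false, iff_false, not_and, and_imp]
      intro h1' h2' h3'
      linarith
    rw [h1, h2]
    simp
  rcases lt_or_ge x (d b) with hxb | hxb
  · set m := tinv d b x with hm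
    have hd0x : d 0 ≤ x := by
      have h := hmonoD (mem_Ici.mpr le_rfl) (mem_Ici.mpr ha) ha
      linarith
    have hdm : d m = x := tinv_spec hcont hb hd0x hxb.le
    have hm0 : 0 ≤ m := tinv_nonneg hb x
    have hmb : m ≤ b := tinv_le hb hxb.le
    have ham : a ≤ m := by
      by_contra h
      push_neg at h
      have : d m < d a := hmono (mem_Ici.mpr hm0) (mem_Ici.mpr ha) h
      rw [hdm] at this; linarith
    have h1 : d ⁻¹' Iic x ∩ Ioc a b = Ioc a m := by
      ext s
      simp only [mem_inter_iff, mem_preimage, mem_Iic, mem_Ioc]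
      constructor
      · rintro ⟨hdx, hsa, hsb⟩
        refine ⟨hsa, ?_⟩
        by_contra h
        push_neg at h
        have : d m < d s := hmono (mem_Ici.mpr hm0) (mem_Ici.mpr (ha.trans hsa.le)) h
        rw [hdm] at this; linarith
      · rintro ⟨hsa, hsm⟩
        refine ⟨?_, hsa, hsm.trans hmb⟩
        have := hmonoD (mem_Ici.mpr (ha.trans hsa.le)) (mem_Ici.mpr hm0) hsm
        rw [hdm] at this; exact this
    have h2 : Iic x ∩ Ioc (d a) (d b) = Ioc (d a) x := by
      ext z
      simp only [mem_inter_iff, mem_Iic, mem_Ioc]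
      constructor
      · rintro ⟨hz, hz1, hz2⟩; exact ⟨hz1, hz⟩
      · rintro ⟨hz1, hz2⟩; exact ⟨hz2, hz1, hz2.trans hxb.le⟩
    rw [h1, h2, lint_Ioc hFnn hint hftc ha ham, hdm, Real.volume_Ioc]
  · have h1 : d ⁻¹' Iic x ∩ Ioc a b = Ioc a b := by
      refine inter_eq_right.mpr fun s hs => ?_
      have : d s ≤ d b := hmonoD (mem_Ici.mpr (ha.trans hs.1.le)) (mem_Ici.mpr hb) hs.2
      exact mem_preimage.mpr (mem_Iic.mpr (this.trans hxb))
    have h2 : Iic x ∩ Ioc (d a) (d b) = Ioc (d a) (d b) := by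
      refine inter_eq_right.mpr fun z hz => mem_Iic.mpr (hz.2.trans hxb)
    rw [h1, h2, lint_Ioc hFnn hint hftc ha hab, Real.volume_Ioc]

lemma glue_contradiction (f g : ℝ → ℝ)
    (hstrict : ∀ d : ℝ → ℝ,
      (∀ t ≥ (0:ℝ), IntervalIntegrable (fun s => f (d s) + g s) volume 0 t) →
      (∀ t ≥ (0:ℝ), d t = ∫ s in (0:ℝ)..t, (f (d s) + g s)) →
      StrictMonoOn d (Ici 0))
    (c ct : ℝ → ℝ)
    (hc_int : ∀ t ≥ (0:ℝ), IntervalIntegrable (fun s => f (c s) + g s) volume 0 t)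
    (hc : ∀ t ≥ (0:ℝ), c t = ∫ s in (0:ℝ)..t, (f (c s) + g s))
    (hct_int : ∀ t ≥ (0:ℝ), IntervalIntegrable (fun s => f (ct s) + g s) volume 0 t)
    (hct : ∀ t ≥ (0:ℝ), ct t = ∫ s in (0:ℝ)..t, (f (ct s) + g s))
    {u s₀ x₀ : ℝ} (hu0 : 0 ≤ u) (hus : u < s₀)
    (hctu : ct u = x₀) (hcs : c s₀ = x₀)
    (hgv : ∀ v ∈ Icc u s₀, f x₀ + g v = 0) : False := by
  classical
  set D : ℝ → ℝ := fun t => if t ≤ u then ct t else if t ≤ s₀ then x₀ else c t with hD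
  have hs₀0 : 0 ≤ s₀ := hu0.trans hus.le
  have hDval1 : ∀ {t : ℝ}, t ≤ u → D t = ct t := fun {t} h => by
    rw [hD]; simp only [if_pos h]
  have hDval2 : ∀ {t : ℝ}, u < t → t ≤ s₀ → D t = x₀ := fun {t} h1 h2 => by
    rw [hD]; simp only [if_neg (not_le.mpr h1), if_pos h2]
  have hDval3 : ∀ {t : ℝ}, s₀ < t → D t = c t := fun {t} h => by
    rw [hD]; simp only [if_neg (not_le.mpr ((hus.trans h))), if_neg (not_le.mpr h)]
  have hG1 : ∀ s, s ≤ u → f (D s) + g s = f (ct s) + g s := fun s h => by rw [hDval1 h]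
  have hG2 : ∀ s, u ≤ s → s ≤ s₀ → f (D s) + g s = 0 := by
    intro s h1 h2
    rcases eq_or_lt_of_le h1 with h | h
    · rw [← h, hDval1 le_rfl, hctu]
      exact hgv u ⟨le_rfl, hus.le⟩
    · rw [hDval2 h h2]
      exact hgv s ⟨h1, h2⟩
  have hG3 : ∀ s, s₀ < s → f (D s) + g s = f (c s) + g s := fun s h => by rw [hDval3 h]
  have hFs₀ : f (c s₀) + g s₀ = 0 := by rw [hcs]; exact hgv s₀ ⟨hus.le, le_rfl⟩
  -- integrability
  have hD_int : ∀ t ≥ (0:ℝ), IntervalIntegrable (fun s => f (D s) + g s) volume 0 t := by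
    intro t ht
    rw [intervalIntegrable_iff_integrableOn_Ioc_of_le ht]
    have e1 : IntegrableOn (fun s => f (D s) + g s) (Ioc 0 t ∩ Iic u) volume := by
      refine (((hct_int t ht).1.mono_set inter_subset_left).congr_fun ?_
        (measurableSet_Ioc.inter measurableSet_Iic))
      intro s hs
      exact (hG1 s hs.2).symm
    have e2 : IntegrableOn (fun s => f (D s) + g s) (Ioc 0 t ∩ Ioc u s₀) volume := by
      refine ((integrableOn_zero).congr_fun ?_ (measurableSet_Ioc.inter measurableSet_Ioc))
      intro s hs
      exact (hG2 s hs.2.1.le hs.2.2).symm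
    have e3 : IntegrableOn (fun s => f (D s) + g s) (Ioc 0 t ∩ Ioi s₀) volume := by
      refine (((hc_int t ht).1.mono_set inter_subset_left).congr_fun ?_
        (measurableSet_Ioc.inter measurableSet_Ioi))
      intro s hs
      exact (hG3 s hs.2).symm
    refine ((e1.union e2).union e3).mono_set fun s hs => ?_
    rcases le_or_gt s u with h1 | h1
    · exact Or.inl (Or.inl ⟨hs, h1⟩)
    rcases le_or_gt s s₀ with h2 | h2
    · exact Or.inl (Or.inr ⟨hs, h1, h2⟩)
    · exact Or.inr ⟨hs, h2⟩
  -- the equation up to u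
  have key0 : ∀ t, 0 ≤ t → t ≤ u → (∫ s in (0:ℝ)..t, (f (D s) + g s)) = ct t := by
    intro t h0 h1
    rw [hct t h0]
    refine intervalIntegral.integral_congr fun s hs => ?_
    rw [uIcc_of_le h0] at hs
    exact hG1 s (hs.2.trans h1)
  -- the equation up to s₀
  have key1 : ∀ t, u ≤ t → t ≤ s₀ → (∫ s in (0:ℝ)..t, (f (D s) + g s)) = x₀ := by
    intro t h1 h2
    have ht : 0 ≤ t := hu0.trans h1
    rw [← intervalIntegral.integral_add_adjacent_intervals
      (a := (0:ℝ)) (b := u) (c := t)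
      (hD_int u hu0)
      ((hD_int t ht).mono_set (by rw [uIcc_of_le h1, uIcc_of_le ht]; exact Icc_subset_Icc hu0 le_rfl))]
    rw [key0 u hu0 le_rfl, hctu]
    have : (∫ s in u..t, (f (D s) + g s)) = ∫ s in u..t, (0:ℝ) := by
      refine intervalIntegral.integral_congr fun s hs => ?_
      rw [uIcc_of_le h1] at hs
      exact hG2 s hs.1 (hs.2.trans h2)
    rw [this]
    simp
  have hD_eq : ∀ t ≥ (0:ℝ), D t = ∫ s in (0:ℝ)..t, (f (D s) + g s) := by
    intro t ht
    rcases le_or_gt t u with h1 | h1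
    · rw [hDval1 h1, key0 t ht h1]
    rcases le_or_gt t s₀ with h2 | h2
    · rw [hDval2 h1 h2, key1 t h1.le h2]
    · rw [hDval3 h2]
      have ht : (0:ℝ) ≤ t := hs₀0.trans h2.le
      rw [← intervalIntegral.integral_add_adjacent_intervals
        (a := (0:ℝ)) (b := s₀) (c := t)
        (hD_int s₀ hs₀0)
        ((hD_int t ht).mono_set (by rw [uIcc_of_le h2.le, uIcc_of_le ht]; exact Icc_subset_Icc hs₀0 le_rfl))]
      rw [key1 s₀ hus.le le_rfl]
      have : (∫ s in s₀..t, (f (D s) + g s)) = ∫ s in s₀..t, (f (c s) + g s) := by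
        refine intervalIntegral.integral_congr fun s hs => ?_
        rw [uIcc_of_le h2.le] at hs
        rcases eq_or_lt_of_le hs.1 with h | h
        · rw [← h, hG2 s₀ hus.le le_rfl, hFs₀]
        · exact hG3 s h
      rw [this, sol_diff hc_int hc hs₀0 h2.le, hcs]
      ring
  have hsm := hstrict D hD_int hD_eq
  have h1 : D u = x₀ := by rw [hDval1 le_rfl, hctu]
  have h2 : D s₀ = x₀ := hDval2 hus le_rfl
  have := hsm (mem_Ici.mpr hu0) (mem_Ici.mpr hs₀0) hus
  rw [h1, h2] at this
  exact lt_irrefl _ this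

lemma key_lemma (f g : ℝ → ℝ)
    (hfr : RightCont f) (hgr : RightCont g)
    (hgm : ∀ s t, (0:ℝ) ≤ s → s ≤ t → g s ≤ g t)
    (hstrict : ∀ d : ℝ → ℝ,
      (∀ t ≥ (0:ℝ), IntervalIntegrable (fun s => f (d s) + g s) volume 0 t) →
      (∀ t ≥ (0:ℝ), d t = ∫ s in (0:ℝ)..t, (f (d s) + g s)) →
      StrictMonoOn d (Ici 0))
    (c ct : ℝ → ℝ) (hccont : Continuous c) (hctcont : Continuous ct)
    (hc_int : ∀ t ≥ (0:ℝ), IntervalIntegrable (fun s => f (c s) + g s) volume 0 t)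
    (hc : ∀ t ≥ (0:ℝ), c t = ∫ s in (0:ℝ)..t, (f (c s) + g s))
    (hct_int : ∀ t ≥ (0:ℝ), IntervalIntegrable (fun s => f (ct s) + g s) volume 0 t)
    (hct : ∀ t ≥ (0:ℝ), ct t = ∫ s in (0:ℝ)..t, (f (ct s) + g s))
    (t₀ : ℝ) (ht₀ : 0 ≤ t₀) : ¬ c t₀ < ct t₀ := by
  intro hlt
  have hcm : StrictMonoOn c (Ici 0) := hstrict c hc_int hc
  have hctm : StrictMonoOn ct (Ici 0) := hstrict ct hct_int hct
  have hc0 : c 0 = 0 := by rw [hc 0 le_rfl, intervalIntegral.integral_same]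
  have hct0 : ct 0 = 0 := by rw [hct 0 le_rfl, intervalIntegral.integral_same]
  have ht₀pos : 0 < t₀ := by
    rcases eq_or_lt_of_le ht₀ with h | h
    · exfalso; rw [← h, hc0, hct0] at hlt; exact lt_irrefl _ hlt
    · exact h
  -- right continuity of the integrands
  have hcwa : ∀ (d : ℝ → ℝ), Continuous d → StrictMonoOn d (Ici 0) → d 0 = 0 →
      ∀ t ≥ (0:ℝ), ContinuousWithinAt (fun s => f (d s) + g s) (Ici t) t := by
    intro d hdc hdm hd0 t ht
    have hdt : (0:ℝ) ≤ d t := by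
      rw [← hd0]
      exact hdm.monotoneOn (mem_Ici.mpr le_rfl) (mem_Ici.mpr ht) ht
    have h1 : ContinuousWithinAt (fun s => f (d s)) (Ici t) t := by
      refine (hfr (d t) hdt).comp hdc.continuousWithinAt fun s hs => ?_
      exact hdm.monotoneOn (mem_Ici.mpr ht) (mem_Ici.mpr (ht.trans hs)) hs
    exact h1.add (hgr t ht)
  have hF₁nn : ∀ t ≥ (0:ℝ), 0 ≤ f (c t) + g t :=
    F_nonneg (hcwa c hccont hcm hc0) hc_int hc hcm
  have hF₂nn : ∀ t ≥ (0:ℝ), 0 ≤ f (ct t) + g t :=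
    F_nonneg (hcwa ct hctcont hctm hct0) hct_int hct hctm
  -- the last agreement time
  set A : Set ℝ := Icc 0 t₀ ∩ {t | c t = ct t} with hA
  have hA_closed : IsClosed A := isClosed_Icc.inter (isClosed_eq hccont hctcont)
  have h0A : (0:ℝ) ∈ A := ⟨⟨le_rfl, ht₀⟩, by simp only [mem_setOf_eq, hc0, hct0]⟩
  have hA_bdd : BddAbove A := ⟨t₀, fun t ht => ht.1.2⟩
  set tstar := sSup A with htstar
  have htstar_mem : tstar ∈ A := hA_closed.csSup_mem ⟨0, h0A⟩ hA_bdd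
  have htstar0 : 0 ≤ tstar := htstar_mem.1.1
  have hstar_eq : c tstar = ct tstar := htstar_mem.2
  have htstart₀ : tstar < t₀ := by
    rcases eq_or_lt_of_le htstar_mem.1.2 with h | h
    · exfalso; rw [h] at hstar_eq; rw [hstar_eq] at hlt; exact lt_irrefl _ hlt
    · exact h
  have hcc : ∀ s, tstar < s → s ≤ t₀ → c s < ct s := by
    intro s h1 h2
    have hs0 : (0:ℝ) ≤ s := htstar0.trans h1.le
    rcases lt_trichotomy (c s) (ct s) with h | h | h
    · exact h
    · exfalso
      have : s ∈ A := ⟨⟨hs0, h2⟩, h⟩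
      exact absurd (le_csSup hA_bdd this) (not_le.mpr h1)
    · exfalso
      have hcont2 : ContinuousOn (fun r => ct r - c r) (Icc s t₀) :=
        (hctcont.sub hccont).continuousOn
      have : (0:ℝ) ∈ Icc (ct s - c s) (ct t₀ - c t₀) := ⟨by linarith, by linarith⟩
      obtain ⟨r, hr, hr0⟩ := intermediate_value_Icc h2 hcont2 this
      have hrA : r ∈ A := by
        refine ⟨⟨hs0.trans hr.1, hr.2⟩, ?_⟩
        have h' : ct r - c r = 0 := hr0
        simp only [mem_setOf_eq]
        linarith
      have : r ≤ tstar := le_csSup hA_bdd hrA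
      linarith [hr.1, h1]
  -- the inverse of ct and the crossing point
  set y₀ := c t₀ with hy₀
  set ystar := c tstar with hystar
  set τ := tinv ct t₀ with hτ
  have hy₀0 : (0:ℝ) ≤ y₀ := by
    rw [hy₀, ← hc0]
    exact hcm.monotoneOn (mem_Ici.mpr le_rfl) (mem_Ici.mpr ht₀) ht₀
  have hystar0 : (0:ℝ) ≤ ystar := by
    rw [hystar, ← hc0]
    exact hcm.monotoneOn (mem_Ici.mpr le_rfl) (mem_Ici.mpr htstar0) htstar0
  have hcτs : ∀ s, tstar < s → s ≤ t₀ → ct (τ (c s)) = c s ∧ 0 ≤ τ (c s) ∧ τ (c s) < s := by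
    intro s h1 h2
    have hs0 : (0:ℝ) ≤ s := htstar0.trans h1.le
    have hcs0 : (0:ℝ) ≤ c s := by
      rw [← hc0]; exact hcm.monotoneOn (mem_Ici.mpr le_rfl) (mem_Ici.mpr hs0) hs0
    have hcsct : c s ≤ ct t₀ := le_trans (hcm.monotoneOn (mem_Ici.mpr hs0) (mem_Ici.mpr ht₀) h2) hlt.le
    have hspec : ct (τ (c s)) = c s := tinv_spec hctcont ht₀ (by rw [hct0]; exact hcs0) hcsct
    have hτ0 : 0 ≤ τ (c s) := tinv_nonneg ht₀ _
    refine ⟨hspec, hτ0, ?_⟩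
    by_contra hcon
    push_neg at hcon
    have : ct s ≤ ct (τ (c s)) := hctm.monotoneOn (mem_Ici.mpr hs0) (mem_Ici.mpr hτ0) hcon
    rw [hspec] at this
    exact absurd this (not_le.mpr (hcc s h1 h2))
  set u₀ := τ y₀ with hu₀
  have hctu₀ : ct u₀ = y₀ := tinv_spec hctcont ht₀ (by rw [hct0]; exact hy₀0) hlt.le
  have hu₀0 : 0 ≤ u₀ := tinv_nonneg ht₀ _
  have hu₀t₀ : u₀ < t₀ := by
    by_contra hcon
    push_neg at hcon
    have h1 : ct t₀ ≤ ct u₀ := hctm.monotoneOn (mem_Ici.mpr ht₀) (mem_Ici.mpr hu₀0) hcon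
    rw [hctu₀] at h1
    exact absurd h1 (not_le.mpr hlt)
  have htstaru₀ : tstar < u₀ := by
    by_contra hcon
    push_neg at hcon
    have h1 : ct u₀ ≤ ct tstar := hctm.monotoneOn (mem_Ici.mpr hu₀0) (mem_Ici.mpr htstar0) hcon
    rw [hctu₀, ← hstar_eq] at h1
    have h2 : ystar < y₀ := hcm htstar_mem.1.1 (mem_Ici.mpr ht₀) htstart₀
    rw [hystar, hy₀] at h2
    linarith
  -- case split
  by_cases hZ : ∃ s, tstar < s ∧ s ≤ t₀ ∧ f (c s) + g s = 0
  · -- case (a): glued solution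
    obtain ⟨s₀, hs₀1, hs₀2, hs₀F⟩ := hZ
    obtain ⟨hspec, hτ0, hτlt⟩ := hcτs s₀ hs₀1 hs₀2
    set u := τ (c s₀) with hu
    have hgs₀ : g s₀ = -f (c s₀) := by linarith
    have hgu : g u = g s₀ := by
      have h1 : g u ≤ g s₀ := hgm u s₀ hτ0 hτlt.le
      have h2 : 0 ≤ f (ct u) + g u := hF₂nn u hτ0
      rw [hspec] at h2
      linarith
    refine glue_contradiction f g hstrict c ct hc_int hc hct_int hct hτ0 hτlt hspec rfl ?_
    intro v hv
    have h1 : g u ≤ g v := hgm u v hτ0 hv.1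
    have h2 : g v ≤ g s₀ := hgm v s₀ (hτ0.trans hv.1) hv.2
    rw [hgu, hgs₀] at h1
    rw [hgs₀] at h2
    linarith
  · -- case (b): measure comparison
    push_neg at hZ
    have hF₁pos : ∀ s, tstar < s → s ≤ t₀ → 0 < f (c s) + g s := by
      intro s h1 h2
      rcases eq_or_lt_of_le (hF₁nn s (htstar0.trans h1.le)) with h | h
      · exact absurd h.symm (hZ s h1 h2)
      · exact h
    set H : ℝ → ENNReal := fun x => (ENNReal.ofReal (f x + g (τ x)))⁻¹ with hH
    set I₁ := Ioc tstar t₀ with hI₁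
    set I₂ := Ioc tstar u₀ with hI₂
    set J := Ioc ystar y₀ with hJ
    -- the two measure identities
    have hmap1 : Measure.map c ((volume.restrict I₁).withDensity
        (fun s => ENNReal.ofReal (f (c s) + g s))) = volume.restrict J :=
      map_withDensity_eq hccont hcm hF₁nn hc_int hc htstar0 htstart₀.le
    have hmap2 : Measure.map ct ((volume.restrict I₂).withDensity
        (fun s => ENNReal.ofReal (f (ct s) + g s))) = volume.restrict J := by
      have := map_withDensity_eq hctcont hctm hF₂nn hct_int hct htstar0 htstaru₀.le
      rw [this, ← hstar_eq, hctu₀]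
    -- measurability facts
    have hgmax_mono : Monotone (fun s : ℝ => g (max 0 s)) := by
      intro s t hst
      exact hgm _ _ (le_max_left _ _) (max_le_max le_rfl hst)
    have hgτ_mono : Monotone (fun x : ℝ => g (τ x)) := by
      intro x y hxy
      exact hgm _ _ (tinv_nonneg ht₀ x) (tinv_mono ht₀ hxy)
    have hfmax : Measurable (fun x : ℝ => f (max 0 x)) := measurable_of_rightCont hfr
    have hH_ae : AEMeasurable H (volume.restrict J) := by
      have hmeas : Measurable (fun x : ℝ => (ENNReal.ofReal (f (max 0 x) + g (τ x)))⁻¹) :=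
        ((hfmax.add hgτ_mono.measurable).ennreal_ofReal).inv
      refine hmeas.aemeasurable.congr ?_
      rw [Filter.EventuallyEq, ae_restrict_iff' measurableSet_Ioc]
      refine ae_of_all _ fun x hx => ?_
      have hmx : max 0 x = x := max_eq_right (hystar0.trans hx.1.le)
      simp only [hH, hmx]
    have hF₁ae : AEMeasurable (fun s => ENNReal.ofReal (f (c s) + g s)) (volume.restrict I₁) := by
      have h1 : AEMeasurable (fun s => f (c s) + g s) (volume.restrict (Ioc 0 t₀)) :=
        (hc_int t₀ ht₀).1.aestronglyMeasurable.aemeasurable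
      exact (h1.mono_measure (Measure.restrict_mono (Ioc_subset_Ioc htstar0 le_rfl) le_rfl)).ennreal_ofReal
    have hF₂ae : AEMeasurable (fun s => ENNReal.ofReal (f (ct s) + g s)) (volume.restrict I₂) := by
      have h1 : AEMeasurable (fun s => f (ct s) + g s) (volume.restrict (Ioc 0 t₀)) :=
        (hct_int t₀ ht₀).1.aestronglyMeasurable.aemeasurable
      exact (h1.mono_measure (Measure.restrict_mono (Ioc_subset_Ioc htstar0 hu₀t₀.le) le_rfl)).ennreal_ofReal
    have hgae₁ : AEMeasurable g (volume.restrict I₁) := by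
      refine hgmax_mono.measurable.aemeasurable.congr ?_
      rw [Filter.EventuallyEq, ae_restrict_iff' measurableSet_Ioc]
      exact ae_of_all _ fun s hs => by rw [max_eq_right (htstar0.trans hs.1.le)]
    have hgae₂ : AEMeasurable g (volume.restrict I₂) := by
      refine hgmax_mono.measurable.aemeasurable.congr ?_
      rw [Filter.EventuallyEq, ae_restrict_iff' measurableSet_Ioc]
      exact ae_of_all _ fun s hs => by rw [max_eq_right (htstar0.trans hs.1.le)]
    have hfc_ae : AEMeasurable (fun s => f (c s)) (volume.restrict I₁) := by
      have h1 : AEMeasurable (fun s => f (c s) + g s) (volume.restrict I₁) :=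
        (hc_int t₀ ht₀).1.aestronglyMeasurable.aemeasurable.mono_measure
          (Measure.restrict_mono (Ioc_subset_Ioc htstar0 le_rfl) le_rfl)
      exact (h1.sub hgae₁).congr (ae_of_all _ fun s => by simp only [Pi.sub_apply]; ring)
    have hfct_ae : AEMeasurable (fun s => f (ct s)) (volume.restrict I₂) := by
      have h1 : AEMeasurable (fun s => f (ct s) + g s) (volume.restrict I₂) :=
        ((hct_int t₀ ht₀).1.aestronglyMeasurable.aemeasurable.mono_measure
          (Measure.restrict_mono (Ioc_subset_Ioc htstar0 hu₀t₀.le) le_rfl))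
      exact (h1.sub hgae₂).congr (ae_of_all _ fun s => by simp only [Pi.sub_apply]; ring)
    have hHc_ae : AEMeasurable (fun s => H (c s)) (volume.restrict I₁) := by
      have : AEMeasurable (fun s => f (c s) + g (τ (c s))) (volume.restrict I₁) :=
        hfc_ae.add ((hgτ_mono.measurable.comp hccont.measurable).aemeasurable)
      exact this.ennreal_ofReal.inv
    have hHct_ae : AEMeasurable (fun s => H (ct s)) (volume.restrict I₂) := by
      have : AEMeasurable (fun s => f (ct s) + g (τ (ct s))) (volume.restrict I₂) :=
        hfct_ae.add ((hgτ_mono.measurable.comp hctcont.measurable).aemeasurable)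
      exact this.ennreal_ofReal.inv
    -- the chain of inequalities
    have step1 : volume I₁ ≤ ∫⁻ s in I₁, H (c s) * ENNReal.ofReal (f (c s) + g s) := by
      rw [← setLIntegral_one]
      refine lintegral_mono_ae ?_
      rw [ae_restrict_iff' measurableSet_Ioc]
      refine ae_of_all _ fun s hs => ?_
      have hFpos : 0 < f (c s) + g s := hF₁pos s hs.1 hs.2
      obtain ⟨hspec, hτ0, hτlt⟩ := hcτs s hs.1 hs.2
      have hden : f (c s) + g (τ (c s)) ≤ f (c s) + g s := by
        have := hgm (τ (c s)) s hτ0 hτlt.le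
        linarith
      calc (1:ENNReal) = (ENNReal.ofReal (f (c s) + g s))⁻¹ * ENNReal.ofReal (f (c s) + g s) := by
            rw [ENNReal.inv_mul_cancel (by simpa using hFpos) ENNReal.ofReal_ne_top]
        _ ≤ H (c s) * ENNReal.ofReal (f (c s) + g s) := by
            refine mul_le_mul_left ?_ _
            simp only [hH]
            exact ENNReal.inv_le_inv' (ENNReal.ofReal_le_ofReal hden)
    have step3 : ∫⁻ s in I₁, H (c s) * ENNReal.ofReal (f (c s) + g s)
        = ∫⁻ x in J, H x := by
      have e1 : ∫⁻ s in I₁, H (c s) * ENNReal.ofReal (f (c s) + g s)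
          = ∫⁻ s, ((fun s => ENNReal.ofReal (f (c s) + g s)) * (fun s => H (c s))) s
            ∂(volume.restrict I₁) := by
        refine lintegral_congr fun s => ?_
        simp only [Pi.mul_apply]
        rw [mul_comm]
      rw [e1, ← lintegral_withDensity_eq_lintegral_mul₀ hF₁ae hHc_ae]
      have e2 : AEMeasurable H (Measure.map c ((volume.restrict I₁).withDensity
          (fun s => ENNReal.ofReal (f (c s) + g s)))) := by rw [hmap1]; exact hH_ae
      rw [← lintegral_map' e2 hccont.measurable.aemeasurable, hmap1]
    have step4 : ∫⁻ x in J, H x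
        = ∫⁻ s in I₂, H (ct s) * ENNReal.ofReal (f (ct s) + g s) := by
      have e2 : AEMeasurable H (Measure.map ct ((volume.restrict I₂).withDensity
          (fun s => ENNReal.ofReal (f (ct s) + g s)))) := by rw [hmap2]; exact hH_ae
      rw [← hmap2, lintegral_map' e2 hctcont.measurable.aemeasurable,
        lintegral_withDensity_eq_lintegral_mul₀ hF₂ae hHct_ae]
      refine lintegral_congr fun s => ?_
      simp only [Pi.mul_apply]
      rw [mul_comm]
    have step5 : ∫⁻ s in I₂, H (ct s) * ENNReal.ofReal (f (ct s) + g s) ≤ volume I₂ := by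
      rw [← setLIntegral_one]
      refine lintegral_mono_ae ?_
      rw [ae_restrict_iff' measurableSet_Ioc]
      refine ae_of_all _ fun s hs => ?_
      have hτct : τ (ct s) = s :=
        tinv_eval hctm ht₀ ⟨htstar0.trans hs.1.le, hs.2.trans hu₀t₀.le⟩
      simp only [hH, hτct]
      rcases eq_or_ne (ENNReal.ofReal (f (ct s) + g s)) 0 with h | h
      · rw [h, mul_zero]; exact zero_le_one
      · rw [ENNReal.inv_mul_cancel h ENNReal.ofReal_ne_top]
    have hfinal : volume I₁ ≤ volume I₂ := by
      calc volume I₁ ≤ _ := step1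
        _ = _ := step3
        _ = _ := step4
        _ ≤ volume I₂ := step5
    rw [hI₁, hI₂, Real.volume_Ioc, Real.volume_Ioc] at hfinal
    have := (ENNReal.ofReal_le_ofReal_iff (by linarith : (0:ℝ) ≤ u₀ - tstar)).mp hfinal
    linarith

/-- if every solution of `c(t) = ∫₀ᵗ (f(c(s)) + g(s)) ds` is
strictly increasing, then the solution is unique. -/
theorem strict_monotone_forces_uniqueness
    (f fm g gm : ℝ → ℝ)
    (hadm : AdmissiblePair f fm g gm)
    (hstrict : ∀ d : ℝ → ℝ,
      (∀ t ≥ (0:ℝ), IntervalIntegrable (fun s => f (d s) + g s) volume 0 t) →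
      (∀ t ≥ (0:ℝ), d t = ∫ s in (0:ℝ)..t, (f (d s) + g s)) →
      StrictMonoOn d (Ici 0))
    (c ct : ℝ → ℝ)
    (hc_int : ∀ t ≥ (0:ℝ), IntervalIntegrable (fun s => f (c s) + g s) volume 0 t)
    (hc : ∀ t ≥ (0:ℝ), c t = ∫ s in (0:ℝ)..t, (f (c s) + g s))
    (hct_int : ∀ t ≥ (0:ℝ), IntervalIntegrable (fun s => f (ct s) + g s) volume 0 t)
    (hct : ∀ t ≥ (0:ℝ), ct t = ∫ s in (0:ℝ)..t, (f (ct s) + g s)) :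
    ∀ t ≥ (0:ℝ), c t = ct t := by
  obtain ⟨hfr, -, -, hgr, -, hgm, -⟩ := hadm
  -- any solution, clamped to `[0,∞)`, is continuous
  have hcont_sol : ∀ (d : ℝ → ℝ),
      (∀ t ≥ (0:ℝ), IntervalIntegrable (fun s => f (d s) + g s) volume 0 t) →
      (∀ t ≥ (0:ℝ), d t = ∫ s in (0:ℝ)..t, (f (d s) + g s)) →
      Continuous (fun t => d (max 0 t)) := by
    intro d hint hftc
    have hcontOn : ContinuousOn d (Ici 0) := by
      intro t ht
      replace ht : (0:ℝ) ≤ t := ht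
      have hT : (0:ℝ) ≤ t + 1 := by linarith
      have hP : ContinuousOn (fun x => ∫ s in (0:ℝ)..x, (f (d s) + g s)) (uIcc 0 (t+1)) :=
        intervalIntegral.continuousOn_primitive_interval' (hint (t+1) hT) left_mem_uIcc
      rw [uIcc_of_le hT] at hP
      have heq : ∀ y ∈ Icc (0:ℝ) (t+1), d y = ∫ s in (0:ℝ)..y, (f (d s) + g s) :=
        fun y hy => hftc y hy.1
      have h1 : ContinuousWithinAt d (Icc 0 (t+1)) t := by
        refine (hP t ⟨ht, by linarith⟩).congr heq (heq t ⟨ht, by linarith⟩)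
      refine h1.mono_of_mem_nhdsWithin ?_
      rw [← Ici_inter_Iic]
      exact inter_mem self_mem_nhdsWithin
        (mem_nhdsWithin_of_mem_nhds (Iic_mem_nhds (by linarith)))
    exact hcontOn.comp_continuous (continuous_const.max continuous_id)
      (fun x => mem_Ici.mpr (le_max_left 0 x))
  -- clamped versions of the two solutions
  set C : ℝ → ℝ := fun t => c (max 0 t) with hC
  set CT : ℝ → ℝ := fun t => ct (max 0 t) with hCT
  have hCeq : ∀ t, 0 ≤ t → C t = c t := fun t ht => by rw [hC]; simp [max_eq_right ht]
  have hCTeq : ∀ t, 0 ≤ t → CT t = ct t := fun t ht => by rw [hCT]; simp [max_eq_right ht]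
  have hC_int : ∀ t ≥ (0:ℝ), IntervalIntegrable (fun s => f (C s) + g s) volume 0 t := by
    intro t ht
    rw [intervalIntegrable_iff_integrableOn_Ioc_of_le ht]
    refine ((hc_int t ht).1.congr_fun ?_ measurableSet_Ioc)
    intro s hs
    simp only [hCeq s hs.1.le]
  have hCT_int : ∀ t ≥ (0:ℝ), IntervalIntegrable (fun s => f (CT s) + g s) volume 0 t := by
    intro t ht
    rw [intervalIntegrable_iff_integrableOn_Ioc_of_le ht]
    refine ((hct_int t ht).1.congr_fun ?_ measurableSet_Ioc)
    intro s hs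
    simp only [hCTeq s hs.1.le]
  have hC_sol : ∀ t ≥ (0:ℝ), C t = ∫ s in (0:ℝ)..t, (f (C s) + g s) := by
    intro t ht
    rw [hCeq t ht, hc t ht]
    refine (intervalIntegral.integral_congr fun s hs => ?_).symm
    rw [uIcc_of_le ht] at hs
    rw [hCeq s hs.1]
  have hCT_sol : ∀ t ≥ (0:ℝ), CT t = ∫ s in (0:ℝ)..t, (f (CT s) + g s) := by
    intro t ht
    rw [hCTeq t ht, hct t ht]
    refine (intervalIntegral.integral_congr fun s hs => ?_).symm
    rw [uIcc_of_le ht] at hs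
    rw [hCTeq s hs.1]
  have hCcont : Continuous C := hcont_sol c hc_int hc
  have hCTcont : Continuous CT := hcont_sol ct hct_int hct
  intro t ht
  have h1 := key_lemma f g hfr hgr hgm hstrict C CT hCcont hCTcont
    hC_int hC_sol hCT_int hCT_sol t ht
  have h2 := key_lemma f g hfr hgr hgm hstrict CT C hCTcont hCcont
    hCT_int hCT_sol hC_int hC_sol t ht
  have := le_antisymm (not_lt.mp h2) (not_lt.mp h1)
  rw [hCeq t ht, hCTeq t ht] at this
  exact this
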